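/- Let m ≥ 1 be a natural number and let p : ℝ → [0,∞) be a strictly positive measurable probability density with cumulative distribution function F(u) = ∫_{-∞}^{u} p(t) dt. Let u_1,…,u_m and u'_1,…,u'_m be real numbers with |u_i − u'_i| ≤ 1 for every i. For each i define P_i = ∫_ℝ p(r) · ∏_{j≠i} F(u_i + r − u_j) dr and P'_i = ∫_ℝ p(r) · ∏_{j≠i} F(u'_i + r − u'_j) dr (these are the probabilities that candidate i achieves the noisy maximum when i.i.d. noise with density p is added to the scores u_1,…,u_m, respectively u'_1,…,u'_m). Then for every ε ∈ ℝ: ∑_{i=1}^m max(P_i − e^ε · P'_i, 0) ≤ m · ∫_ℝ max(p(r−2) − e^ε · p(r), 0) dr. -/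

import Mathlib

open MeasureTheory Real

/-- Privacy profile bound for Report Noisy Max with additive noise (Theorem 3.2). -/
theorem rnm_privacy_profile
    (m : ℕ) (hm : 1 ≤ m)
    (p : ℝ → ℝ) (hp_pos : ∀ x, 0 < p x) (hp_meas : Measurable p)
    (hp_int : Integrable p) (hp_one : ∫ x, p x = 1)
    (F : ℝ → ℝ) (hF : ∀ u, F u = ∫ t in Set.Iio u, p t)
    (u u' : Fin m → ℝ) (hu : ∀ i, |u i - u' i| ≤ 1)
    (P P' : Fin m → ℝ)
    (hP : ∀ i, P i = ∫ r, p r * ∏ j ∈ Finset.univ.erase i, F (u i + r - u j))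
    (hP' : ∀ i, P' i = ∫ r, p r * ∏ j ∈ Finset.univ.erase i, F (u' i + r - u' j))
    (ε : ℝ) :
    ∑ i, max (P i - Real.exp ε * P' i) 0
      ≤ m * ∫ r, max (p (r - 2) - Real.exp ε * p r) 0 := by
  set C : ℝ := ∫ r, max (p (r - 2) - Real.exp ε * p r) 0 with hC
  -- basic facts about F
  have hp_nonneg : ∀ x, 0 ≤ p x := fun x => (hp_pos x).le
  have hF_mono : Monotone F := by
    intro a b hab
    rw [hF, hF]
    apply setIntegral_mono_set hp_int.integrableOn
    · exact Filter.Eventually.of_forall hp_nonneg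
    · exact Filter.Eventually.of_forall (Set.Iio_subset_Iio hab)
  have hF_nonneg : ∀ x, 0 ≤ F x := by
    intro x
    rw [hF]
    exact setIntegral_nonneg measurableSet_Iio fun t _ => hp_nonneg t
  have hF_le_one : ∀ x, F x ≤ 1 := by
    intro x
    rw [hF, ← hp_one]
    exact setIntegral_le_integral hp_int (Filter.Eventually.of_forall hp_nonneg)
  have hF_meas : Measurable F := hF_mono.measurable
  -- p shifted is integrable
  have hp_int2 : Integrable (fun r => p (r - 2)) := by
    have := hp_int.comp_sub_right (2 : ℝ)
    exact this
  have hp_meas2 : Measurable fun r => p (r - 2) :=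
    hp_meas.comp (measurable_id.sub_const 2)
  -- integrability of the RHS integrand
  have hmax_meas : Measurable fun r => max (p (r - 2) - Real.exp ε * p r) 0 :=
    (hp_meas2.sub (measurable_const.mul hp_meas)).max measurable_const
  have hmax_int : Integrable (fun r => max (p (r - 2) - Real.exp ε * p r) 0) := by
    apply Integrable.mono' hp_int2 hmax_meas.aestronglyMeasurable
    apply Filter.Eventually.of_forall
    intro r
    rw [Real.norm_eq_abs, abs_of_nonneg (le_max_right _ _)]
    apply max_le _ (hp_nonneg _)
    have : 0 ≤ Real.exp ε * p r := mul_nonneg (Real.exp_pos ε).le (hp_nonneg r)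
    linarith
  have hC_nonneg : 0 ≤ C := by
    apply integral_nonneg
    intro r
    exact le_max_right _ _
  -- key per-index bound
  have key : ∀ i : Fin m, max (P i - Real.exp ε * P' i) 0 ≤ C := by
    intro i
    refine max_le ?_ hC_nonneg
    set g : ℝ → ℝ := fun r => ∏ j ∈ Finset.univ.erase i, F (u i + r - u j) with hg
    have hg_meas : Measurable g := by
      apply Finset.measurable_prod
      intro j _
      exact hF_meas.comp ((measurable_id.const_add (u i)).sub_const (u j))
    have hg_nonneg : ∀ r, 0 ≤ g r := fun r =>
      Finset.prod_nonneg fun j _ => hF_nonneg _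
    have hg_le_one : ∀ r, g r ≤ 1 := fun r =>
      Finset.prod_le_one (fun j _ => hF_nonneg _) (fun j _ => hF_le_one _)
    -- integrability helpers
    have hint_pg : Integrable (fun r => p r * g r) := by
      apply Integrable.mono' hp_int (hp_meas.mul hg_meas).aestronglyMeasurable
      apply Filter.Eventually.of_forall
      intro r
      rw [Real.norm_eq_abs, Pi.mul_apply, abs_of_nonneg (mul_nonneg (hp_nonneg r) (hg_nonneg r))]
      calc p r * g r ≤ p r * 1 := by
            exact mul_le_mul_of_nonneg_left (hg_le_one r) (hp_nonneg r)
        _ = p r := mul_one _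
    have hg2_meas : Measurable fun r => g (r - 2) :=
      hg_meas.comp (measurable_id.sub_const 2)
    have hint_pg2 : Integrable (fun r => p r * g (r - 2)) := by
      apply Integrable.mono' hp_int (hp_meas.mul hg2_meas).aestronglyMeasurable
      apply Filter.Eventually.of_forall
      intro r
      rw [Real.norm_eq_abs, Pi.mul_apply, abs_of_nonneg (mul_nonneg (hp_nonneg r) (hg_nonneg _))]
      calc p r * g (r - 2) ≤ p r * 1 :=
            mul_le_mul_of_nonneg_left (hg_le_one _) (hp_nonneg r)
        _ = p r := mul_one _
    have hint_p2g2 : Integrable (fun r => p (r - 2) * g (r - 2)) := by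
      have := hint_pg.comp_sub_right (2 : ℝ)
      exact this
    -- P i expressed via shift
    have hPi : P i = ∫ r, p (r - 2) * g (r - 2) := by
      rw [hP i]
      exact (integral_sub_right_eq_self (fun r => p r * g r) 2).symm
    -- lower bound on P' i
    have hP'i : (∫ r, p r * g (r - 2)) ≤ P' i := by
      rw [hP' i]
      have hmeas' : Measurable fun r => p r * ∏ j ∈ Finset.univ.erase i, F (u' i + r - u' j) := by
        apply hp_meas.mul
        apply Finset.measurable_prod
        intro j _
        exact hF_meas.comp ((measurable_id.const_add (u' i)).sub_const (u' j))
      apply integral_mono hint_pg2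
      · apply Integrable.mono' hp_int hmeas'.aestronglyMeasurable
        apply Filter.Eventually.of_forall
        intro r
        have hprod_nonneg : (0:ℝ) ≤ ∏ j ∈ Finset.univ.erase i, F (u' i + r - u' j) :=
          Finset.prod_nonneg fun j _ => hF_nonneg _
        have hprod_le : (∏ j ∈ Finset.univ.erase i, F (u' i + r - u' j)) ≤ 1 :=
          Finset.prod_le_one (fun j _ => hF_nonneg _) (fun j _ => hF_le_one _)
        rw [Real.norm_eq_abs, abs_of_nonneg (mul_nonneg (hp_nonneg r) hprod_nonneg)]
        calc p r * ∏ j ∈ Finset.univ.erase i, F (u' i + r - u' j) ≤ p r * 1 :=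
              mul_le_mul_of_nonneg_left hprod_le (hp_nonneg r)
          _ = p r := mul_one _
      · intro r
        apply mul_le_mul_of_nonneg_left _ (hp_nonneg r)
        apply Finset.prod_le_prod (fun j _ => hF_nonneg _)
        intro j _
        apply hF_mono
        have h1 := abs_le.mp (hu i)
        have h2 := abs_le.mp (hu j)
        linarith
    -- combine
    have step1 : P i - Real.exp ε * P' i
        ≤ ∫ r, (p (r - 2) - Real.exp ε * p r) * g (r - 2) := by
      have : (∫ r, (p (r - 2) - Real.exp ε * p r) * g (r - 2))
          = (∫ r, p (r - 2) * g (r - 2)) - Real.exp ε * ∫ r, p r * g (r - 2) := by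
        rw [← integral_const_mul, ← integral_sub hint_p2g2 (hint_pg2.const_mul _)]
        congr 1
        ext r
        ring
      rw [this, hPi]
      have : Real.exp ε * ∫ r, p r * g (r - 2) ≤ Real.exp ε * P' i :=
        mul_le_mul_of_nonneg_left hP'i (Real.exp_pos ε).le
      linarith
    have step2 : (∫ r, (p (r - 2) - Real.exp ε * p r) * g (r - 2)) ≤ C := by
      apply integral_mono _ hmax_int
      · intro r
        rcases le_or_gt 0 (p (r - 2) - Real.exp ε * p r) with h | h
        · calc (p (r - 2) - Real.exp ε * p r) * g (r - 2)
              ≤ (p (r - 2) - Real.exp ε * p r) * 1 :=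
                mul_le_mul_of_nonneg_left (hg_le_one _) h
            _ = p (r - 2) - Real.exp ε * p r := mul_one _
            _ ≤ max (p (r - 2) - Real.exp ε * p r) 0 := le_max_left _ _
        · calc (p (r - 2) - Real.exp ε * p r) * g (r - 2)
              ≤ 0 := mul_nonpos_of_nonpos_of_nonneg h.le (hg_nonneg _)
            _ ≤ max (p (r - 2) - Real.exp ε * p r) 0 := le_max_right _ _
      · have : (fun r => (p (r - 2) - Real.exp ε * p r) * g (r - 2))
            = fun r => p (r - 2) * g (r - 2) - Real.exp ε * (p r * g (r - 2)) := by
          ext r; ring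
        rw [this]
        exact hint_p2g2.sub (hint_pg2.const_mul _)
    linarith
  calc ∑ i, max (P i - Real.exp ε * P' i) 0
      ≤ ∑ _i : Fin m, C := Finset.sum_le_sum fun i _ => key i
    _ = m * C := by simp [Finset.sum_const, nsmul_eq_mul]
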